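/- Let (f_t)_{t∈[0,1]} be a W₁-geodesic between finitely supported f₀, f₁ on a connected locally finite graph G, and let (g_t) be a family on oriented edges with ∂f_t/∂t = −∇g_t and g_t ≥ 0 constructed via a spanning tree as in the paper. Then Σ_{(xy)∈E(G)} g_t(xy) = W₁(f₀,f₁) for every t ∈ [0,1]. -/

import Mathlib

open scoped BigOperators Classical

noncomputable section

variable {V : Type*}

/-- π is a coupling of the finitely supported distributions f₀ and f₁. -/
def IsCoupling (f₀ f₁ : V →₀ ℝ) (π : V × V →₀ ℝ) : Prop :=
  (∀ p, 0 ≤ π p) ∧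
    (∀ x, (π.sum fun p v => if p.1 = x then v else 0) = f₀ x) ∧
    (∀ y, (π.sum fun p v => if p.2 = y then v else 0) = f₁ y)

/-- Transport cost of a coupling, for the graph distance of G. -/
def gcost (G : SimpleGraph V) (π : V × V →₀ ℝ) : ℝ :=
  π.sum fun p v => (G.dist p.1 p.2 : ℝ) * v

/-- π is a W₁-optimal coupling of f₀ and f₁ on the graph G. -/
def IsOptimalCoupling (G : SimpleGraph V) (f₀ f₁ : V →₀ ℝ) (π : V × V →₀ ℝ) : Prop :=
  IsCoupling f₀ f₁ π ∧ ∀ π', IsCoupling f₀ f₁ π' → gcost G π ≤ gcost G π'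

/-- C(f₀,f₁): union of the supports of all W₁-optimal couplings. -/
def commonSupport (G : SimpleGraph V) (f₀ f₁ : V →₀ ℝ) : Set (V × V) :=
  {p | ∃ π, IsOptimalCoupling G f₀ f₁ π ∧ 0 < π p}

/-- f is a (finitely supported) probability distribution. -/
def IsProb (f : V →₀ ℝ) : Prop := (∀ x, 0 ≤ f x) ∧ (f.sum fun _ v => v) = 1

/-- γ(0),…,γ(n) is a geodesic of G of length n. -/
def IsGeodesic (G : SimpleGraph V) (γ : ℕ → V) (n : ℕ) : Prop :=
  (∀ i < n, G.Adj (γ i) (γ (i + 1))) ∧ G.dist (γ 0) (γ n) = n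

/-- The W₁-orientation: x → y if some geodesic with endpoint pair in C(f₀,f₁)
traverses the edge (x,y) in that direction. -/
def OrientedEdge (G : SimpleGraph V) (f₀ f₁ : V →₀ ℝ) (x y : V) : Prop :=
  ∃ (γ : ℕ → V) (n k : ℕ), IsGeodesic G γ n ∧
    (γ 0, γ n) ∈ commonSupport G f₀ f₁ ∧ k + 1 ≤ n ∧ γ k = x ∧ γ (k + 1) = y

/-- The Wasserstein distance W₁ on the graph G. -/
def W1 (G : SimpleGraph V) (f₀ f₁ : V →₀ ℝ) : ℝ :=
  sInf {c | ∃ π, IsCoupling f₀ f₁ π ∧ gcost G π = c}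


namespace TF

open Finset

variable {V : Type*}

def lmarg1 (x : V) : (V × V →₀ ℝ) →ₗ[ℝ] ℝ :=
  Finsupp.lsum ℝ fun p => if p.1 = x then (LinearMap.id : ℝ →ₗ[ℝ] ℝ) else 0

def lmarg2 (y : V) : (V × V →₀ ℝ) →ₗ[ℝ] ℝ :=
  Finsupp.lsum ℝ fun p => if p.2 = y then (LinearMap.id : ℝ →ₗ[ℝ] ℝ) else 0

def lcost (G : SimpleGraph V) : (V × V →₀ ℝ) →ₗ[ℝ] ℝ :=
  Finsupp.lsum ℝ fun p => (G.dist p.1 p.2 : ℝ) • (LinearMap.id : ℝ →ₗ[ℝ] ℝ)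

lemma lmarg1_apply (x : V) (π : V × V →₀ ℝ) :
    lmarg1 x π = π.sum fun p v => if p.1 = x then v else 0 := by
  rw [lmarg1, Finsupp.lsum_apply]
  refine Finsupp.sum_congr fun p _ => ?_
  by_cases h : p.1 = x <;> simp [h]

lemma lmarg2_apply (y : V) (π : V × V →₀ ℝ) :
    lmarg2 y π = π.sum fun p v => if p.2 = y then v else 0 := by
  rw [lmarg2, Finsupp.lsum_apply]
  refine Finsupp.sum_congr fun p _ => ?_
  by_cases h : p.2 = y <;> simp [h]

lemma lcost_apply (G : SimpleGraph V) (π : V × V →₀ ℝ) :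
    lcost G π = gcost G π := by
  rw [lcost, Finsupp.lsum_apply]
  exact Finsupp.sum_congr fun p _ => by simp [smul_eq_mul]

lemma isCoupling_iff {f₀ f₁ : V →₀ ℝ} {π : V × V →₀ ℝ} :
    IsCoupling f₀ f₁ π ↔
      (∀ p, 0 ≤ π p) ∧ (∀ x, lmarg1 x π = f₀ x) ∧ (∀ y, lmarg2 y π = f₁ y) := by
  simp [IsCoupling, lmarg1_apply, lmarg2_apply]

lemma IsProb.le_one {f : V →₀ ℝ} (h : IsProb f) (x : V) : f x ≤ 1 := by
  by_cases hx : x ∈ f.support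
  · calc f x ≤ f.sum fun _ v => v :=
        Finset.single_le_sum (fun i _ => h.1 i) hx
    _ = 1 := h.2
  · simp [Finsupp.notMem_support_iff.mp hx]

lemma coup_fst_mem {f₀ f₁ : V →₀ ℝ} {π : V × V →₀ ℝ} (h : IsCoupling f₀ f₁ π)
    {p : V × V} (hp : π p ≠ 0) : p.1 ∈ f₀.support := by
  have hpos : 0 < π p := (h.1 p).lt_of_ne (Ne.symm hp)
  have hle : π p ≤ π.sum fun q v => if q.1 = p.1 then v else 0 := by
    rw [Finsupp.sum]
    have := Finset.single_le_sum (f := fun q => if (q : V × V).1 = p.1 then π q else 0)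
      (fun q _ => by by_cases hq : (q : V × V).1 = p.1 <;> simp [hq, h.1 q])
      (Finsupp.mem_support_iff.mpr hp)
    simpa using this
  rw [h.2.1 p.1] at hle
  exact Finsupp.mem_support_iff.mpr (by linarith)

lemma coup_snd_mem {f₀ f₁ : V →₀ ℝ} {π : V × V →₀ ℝ} (h : IsCoupling f₀ f₁ π)
    {p : V × V} (hp : π p ≠ 0) : p.2 ∈ f₁.support := by
  have hpos : 0 < π p := (h.1 p).lt_of_ne (Ne.symm hp)
  have hle : π p ≤ π.sum fun q v => if q.2 = p.2 then v else 0 := by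
    rw [Finsupp.sum]
    have := Finset.single_le_sum (f := fun q => if (q : V × V).2 = p.2 then π q else 0)
      (fun q _ => by by_cases hq : (q : V × V).2 = p.2 <;> simp [hq, h.1 q])
      (Finsupp.mem_support_iff.mpr hp)
    simpa using this
  rw [h.2.2 p.2] at hle
  exact Finsupp.mem_support_iff.mpr (by linarith)

lemma coup_support_subset {f₀ f₁ : V →₀ ℝ} {π : V × V →₀ ℝ} (h : IsCoupling f₀ f₁ π) :
    π.support ⊆ f₀.support ×ˢ f₁.support := by
  intro p hp
  rw [Finset.mem_product]
  exact ⟨coup_fst_mem h (Finsupp.mem_support_iff.mp hp),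
    coup_snd_mem h (Finsupp.mem_support_iff.mp hp)⟩

def prodCoupling (f₀ f₁ : V →₀ ℝ) : V × V →₀ ℝ :=
  Finsupp.onFinset (f₀.support ×ˢ f₁.support) (fun p => f₀ p.1 * f₁ p.2) (by
    intro p hp
    rcases mul_ne_zero_iff.mp hp with ⟨h1, h2⟩
    simp [Finset.mem_product, Finsupp.mem_support_iff, h1, h2])

lemma prodCoupling_isCoupling {f₀ f₁ : V →₀ ℝ} (h₀ : IsProb f₀) (h₁ : IsProb f₁) :
    IsCoupling f₀ f₁ (prodCoupling f₀ f₁) := by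
  have hs1 : ∑ b ∈ f₁.support, f₁ b = 1 := h₁.2
  have hs0 : ∑ a ∈ f₀.support, f₀ a = 1 := h₀.2
  refine ⟨fun p => mul_nonneg (h₀.1 _) (h₁.1 _), fun x => ?_, fun y => ?_⟩
  · rw [prodCoupling, Finsupp.onFinset_sum _ (fun _ => by simp), Finset.sum_product]
    have inner : ∀ a, (∑ b ∈ f₁.support, if (a, b).1 = x then f₀ a * f₁ b else 0)
        = if a = x then f₀ a else 0 := by
      intro a
      rw [show (∑ b ∈ f₁.support, if (a, b).1 = x then f₀ a * f₁ b else 0)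
          = ∑ b ∈ f₁.support, if a = x then f₀ a * f₁ b else 0 from rfl]
      by_cases hax : a = x
      · rw [if_pos hax, Finset.sum_congr rfl fun b _ => if_pos hax, ← Finset.mul_sum,
          hs1, mul_one]
      · rw [if_neg hax, Finset.sum_congr rfl fun b _ => if_neg hax, Finset.sum_const_zero]
    rw [Finset.sum_congr rfl fun a _ => inner a, Finset.sum_ite_eq' f₀.support x fun a => f₀ a]
    by_cases hx : x ∈ f₀.support
    · simp [hx]
    · simp [hx, Finsupp.notMem_support_iff.mp hx]
  · rw [prodCoupling, Finsupp.onFinset_sum _ (fun _ => by simp), Finset.sum_product]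
    have inner : ∀ a, (∑ b ∈ f₁.support, if (a, b).2 = y then f₀ a * f₁ b else 0)
        = f₀ a * f₁ y := by
      intro a
      rw [show (∑ b ∈ f₁.support, if (a, b).2 = y then f₀ a * f₁ b else 0)
          = ∑ b ∈ f₁.support, if b = y then f₀ a * f₁ b else 0 from rfl,
        Finset.sum_ite_eq' f₁.support y fun b => f₀ a * f₁ b]
      by_cases hy : y ∈ f₁.support
      · simp [hy]
      · simp [hy, Finsupp.notMem_support_iff.mp hy]
    rw [Finset.sum_congr rfl fun a _ => inner a, ← Finset.sum_mul, hs0, one_mul]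

lemma gcost_nonneg (G : SimpleGraph V) {f₀ f₁ : V →₀ ℝ} {π : V × V →₀ ℝ}
    (h : IsCoupling f₀ f₁ π) : 0 ≤ gcost G π :=
  Finset.sum_nonneg fun p _ => mul_nonneg (by positivity) (h.1 p)

lemma W1_le (G : SimpleGraph V) {f₀ f₁ : V →₀ ℝ} {π : V × V →₀ ℝ}
    (h : IsCoupling f₀ f₁ π) : W1 G f₀ f₁ ≤ gcost G π :=
  csInf_le ⟨0, fun _ ⟨π', h', e⟩ => e ▸ gcost_nonneg G h'⟩ ⟨π, h, rfl⟩

lemma le_W1 (G : SimpleGraph V) {f₀ f₁ : V →₀ ℝ} {c : ℝ}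
    (hne : ∃ π, IsCoupling f₀ f₁ π)
    (hc : ∀ π, IsCoupling f₀ f₁ π → c ≤ gcost G π) : c ≤ W1 G f₀ f₁ := by
  obtain ⟨π, hπ⟩ := hne
  exact le_csInf ⟨gcost G π, π, hπ, rfl⟩ fun b ⟨π', h', e⟩ => e ▸ hc π' h'

lemma optimal_gcost {G : SimpleGraph V} {f₀ f₁ : V →₀ ℝ} {π : V × V →₀ ℝ}
    (h : IsOptimalCoupling G f₀ f₁ π) : gcost G π = W1 G f₀ f₁ :=
  le_antisymm (le_W1 G ⟨π, h.1⟩ h.2) (W1_le G h.1)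

end TF

namespace TF

variable {V : Type*}

lemma exists_optimalCoupling (G : SimpleGraph V) (f₀ f₁ : V →₀ ℝ)
    (h₀ : IsProb f₀) (h₁ : IsProb f₁) :
    ∃ π, IsOptimalCoupling G f₀ f₁ π := by
  classical
  set P : Finset (V × V) := f₀.support ×ˢ f₁.support with hP
  let toC : (↥P → ℝ) → (V × V →₀ ℝ) := fun v =>
    Finsupp.onFinset P (fun q => if h : q ∈ P then v ⟨q, h⟩ else 0)
      (fun q hq => by by_contra h; simp [h] at hq)
  have toC_apply : ∀ (v : ↥P → ℝ) (q : V × V) (hq : q ∈ P), toC v q = v ⟨q, hq⟩ := by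
    intro v q hq; simp [toC, hq]
  have toC_apply' : ∀ (v : ↥P → ℝ) (q : V × V), q ∉ P → toC v q = 0 := by
    intro v q hq; simp [toC, hq]
  have hsupp : ∀ v, (toC v).support ⊆ P := fun v => Finsupp.support_onFinset_subset
  -- cost in coordinates
  let cst : (↥P → ℝ) → ℝ := fun v => ∑ p : ↥P, (G.dist (↑p : V × V).1 (↑p : V × V).2 : ℝ) * v p
  have hcost : ∀ v, gcost G (toC v) = cst v := by
    intro v
    rw [gcost, Finsupp.sum_of_support_subset _ (hsupp v) _ (fun q _ => by simp),
      ← Finset.sum_attach P (fun q => (G.dist q.1 q.2 : ℝ) * toC v q)]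
    rw [show (cst v) = ∑ p ∈ P.attach, (G.dist (↑p : V × V).1 (↑p : V × V).2 : ℝ) * v p by
      rw [← Finset.univ_eq_attach]]
    exact Finset.sum_congr rfl fun p _ => by rw [toC_apply v ↑p p.2]
  have hmarg1 : ∀ v x, lmarg1 x (toC v) = ∑ p : ↥P, if (↑p : V × V).1 = x then v p else 0 := by
    intro v x
    rw [lmarg1_apply, Finsupp.sum_of_support_subset _ (hsupp v) _ (fun q _ => by simp),
      ← Finset.sum_attach P (fun q => if q.1 = x then toC v q else 0), ← Finset.univ_eq_attach]
    exact Finset.sum_congr rfl fun p _ => by rw [toC_apply v ↑p p.2]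
  have hmarg2 : ∀ v y, lmarg2 y (toC v) = ∑ p : ↥P, if (↑p : V × V).2 = y then v p else 0 := by
    intro v y
    rw [lmarg2_apply, Finsupp.sum_of_support_subset _ (hsupp v) _ (fun q _ => by simp),
      ← Finset.sum_attach P (fun q => if q.2 = y then toC v q else 0), ← Finset.univ_eq_attach]
    exact Finset.sum_congr rfl fun p _ => by rw [toC_apply v ↑p p.2]
  have hback : ∀ π : V × V →₀ ℝ, IsCoupling f₀ f₁ π → toC (fun p => π ↑p) = π := by
    intro π hπ
    ext q
    by_cases hq : q ∈ P
    · simpa using toC_apply (fun p : ↥P => π ↑p) q hq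
    · have h0 : π q = 0 := by
        by_contra hne
        exact hq (coup_support_subset hπ (Finsupp.mem_support_iff.mpr hne))
      rw [h0]
      exact toC_apply' (fun p : ↥P => π ↑p) q hq
  set Cs : Set (↥P → ℝ) := {v | IsCoupling f₀ f₁ (toC v)} with hCs
  have hmem : ∀ v, v ∈ Cs ↔ ((∀ p, 0 ≤ v p) ∧ (∀ x, (∑ p : ↥P, if (↑p : V × V).1 = x then v p else 0) = f₀ x)
      ∧ (∀ y, (∑ p : ↥P, if (↑p : V × V).2 = y then v p else 0) = f₁ y)) := by
    intro v
    rw [hCs, Set.mem_setOf_eq, isCoupling_iff]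
    constructor
    · rintro ⟨hn, hm1, hm2⟩
      refine ⟨fun p => by rw [← toC_apply v ↑p p.2]; exact hn ↑p,
        fun x => by rw [← hmarg1]; exact hm1 x, fun y => by rw [← hmarg2]; exact hm2 y⟩
    · rintro ⟨hn, hm1, hm2⟩
      refine ⟨fun q => ?_, fun x => by rw [hmarg1]; exact hm1 x, fun y => by rw [hmarg2]; exact hm2 y⟩
      by_cases hq : q ∈ P
      · rw [toC_apply v q hq]; exact hn _
      · rw [toC_apply' v q hq]
  have hclosed : IsClosed Cs := by
    have : Cs = (⋂ (p : ↥P), {v : ↥P → ℝ | 0 ≤ v p}) ∩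
        ((⋂ (x : V), {v : ↥P → ℝ | (∑ p : ↥P, if (↑p : V × V).1 = x then v p else 0) = f₀ x}) ∩
         (⋂ (y : V), {v : ↥P → ℝ | (∑ p : ↥P, if (↑p : V × V).2 = y then v p else 0) = f₁ y})) := by
      ext v
      simp only [Set.mem_inter_iff, Set.mem_iInter, Set.mem_setOf_eq, hmem v]
    rw [this]
    have hcont : ∀ (pr : V × V → V) (x : V), Continuous fun v : ↥P → ℝ =>
        (∑ p : ↥P, if pr ↑p = x then v p else 0) := by
      intro pr x
      apply continuous_finset_sum
      intro p _
      by_cases h : pr ↑p = x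
      · simpa [h] using continuous_apply p
      · simp only [h, if_false]; exact continuous_const
    refine IsClosed.inter (isClosed_iInter fun p => isClosed_le continuous_const (continuous_apply p))
      (IsClosed.inter (isClosed_iInter fun x => isClosed_eq (hcont Prod.fst x) continuous_const)
        (isClosed_iInter fun y => isClosed_eq (hcont Prod.snd y) continuous_const))
  have hbdd : Cs ⊆ Metric.closedBall 0 1 := by
    intro v hv
    rw [hmem] at hv
    rw [Metric.mem_closedBall, dist_zero_right]
    refine (pi_norm_le_iff_of_nonneg (by norm_num)).mpr fun p => ?_
    rw [Real.norm_eq_abs, abs_of_nonneg (hv.1 p)]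
    calc v p ≤ ∑ p' : ↥P, if (↑p' : V × V).1 = (↑p : V × V).1 then v p' else 0 := by
          refine Finset.single_le_sum (f := fun p' : ↥P => if (↑p' : V × V).1 = (↑p : V × V).1 then v p' else 0)
            (fun q _ => by by_cases h : (↑q : V × V).1 = (↑p : V × V).1 <;> simp [h, hv.1 q])
            (Finset.mem_univ p) |>.trans_eq' (by simp)
      _ = f₀ (↑p : V × V).1 := hv.2.1 _
      _ ≤ 1 := IsProb.le_one h₀ _
  have hne : Cs.Nonempty := by
    refine ⟨fun p => prodCoupling f₀ f₁ ↑p, ?_⟩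
    rw [hCs, Set.mem_setOf_eq, hback _ (prodCoupling_isCoupling h₀ h₁)]
    exact prodCoupling_isCoupling h₀ h₁
  have hcomp : IsCompact Cs :=
    (isCompact_closedBall (0 : ↥P → ℝ) 1).of_isClosed_subset hclosed hbdd
  have hcstc : ContinuousOn cst Cs := by
    apply Continuous.continuousOn
    apply continuous_finset_sum
    intro p _
    exact continuous_const.mul (continuous_apply p)
  obtain ⟨v, hvCs, hvmin⟩ := hcomp.exists_isMinOn hne hcstc
  refine ⟨toC v, hvCs, fun π' hπ' => ?_⟩
  have h1 : gcost G (toC v) = cst v := hcost v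
  have h2 : (fun p : ↥P => π' ↑p) ∈ Cs := by
    rw [hCs, Set.mem_setOf_eq, hback _ hπ']; exact hπ'
  have h3 := hvmin h2
  rw [h1]
  calc cst v ≤ cst (fun p : ↥P => π' ↑p) := h3
    _ = gcost G (toC (fun p : ↥P => π' ↑p)) := (hcost _).symm
    _ = gcost G π' := by rw [hback _ hπ']

end TF

namespace TF

open Finset

variable {V : Type*}

lemma optimal_avg {G : SimpleGraph V} {f₀ f₁ : V →₀ ℝ} {π π' : V × V →₀ ℝ}
    (h : IsOptimalCoupling G f₀ f₁ π) (h' : IsOptimalCoupling G f₀ f₁ π') :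
    IsOptimalCoupling G f₀ f₁ ((1/2 : ℝ) • (π + π')) := by
  have hc : IsCoupling f₀ f₁ ((1/2 : ℝ) • (π + π')) := by
    rw [isCoupling_iff]
    obtain ⟨hn, hm1, hm2⟩ := isCoupling_iff.mp h.1
    obtain ⟨hn', hm1', hm2'⟩ := isCoupling_iff.mp h'.1
    refine ⟨fun p => ?_, fun x => ?_, fun y => ?_⟩
    · rw [Finsupp.smul_apply, Finsupp.add_apply]
      have := hn p; have := hn' p
      simp only [smul_eq_mul]; linarith
    · rw [map_smul, map_add, hm1, hm1']
      simp only [smul_eq_mul]; ring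
    · rw [map_smul, map_add, hm2, hm2']
      simp only [smul_eq_mul]; ring
  have hcost : gcost G ((1/2 : ℝ) • (π + π')) = W1 G f₀ f₁ := by
    rw [← lcost_apply, map_smul, map_add, lcost_apply, lcost_apply,
      optimal_gcost h, optimal_gcost h']
    simp only [smul_eq_mul]; ring
  exact ⟨hc, fun π'' h'' => by rw [hcost]; exact W1_le G h''⟩

lemma exists_optimal_with_support (G : SimpleGraph V) (f₀ f₁ : V →₀ ℝ)
    (h₀ : IsProb f₀) (h₁ : IsProb f₁) (Q : Finset (V × V))
    (hQ : ↑Q ⊆ commonSupport G f₀ f₁) :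
    ∃ π, IsOptimalCoupling G f₀ f₁ π ∧ ∀ p ∈ Q, 0 < π p := by
  induction Q using Finset.induction with
  | empty =>
    obtain ⟨π, hπ⟩ := exists_optimalCoupling G f₀ f₁ h₀ h₁
    exact ⟨π, hπ, by simp⟩
  | @insert p Q hp IH =>
    obtain ⟨π, hπ, hpos⟩ := IH fun q hq => hQ (Finset.mem_coe.mpr (Finset.mem_insert_of_mem hq))
    obtain ⟨π', hπ', hp'⟩ := hQ (Finset.mem_coe.mpr (Finset.mem_insert_self p Q))
    refine ⟨(1/2 : ℝ) • (π + π'), optimal_avg hπ hπ', fun q hq => ?_⟩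
    have he : ((1/2 : ℝ) • (π + π')) q = (1/2 : ℝ) * (π q + π' q) := by
      rw [Finsupp.smul_apply, Finsupp.add_apply, smul_eq_mul]
    rw [he]
    rcases Finset.mem_insert.mp hq with rfl | hqQ
    · have := hπ.1.1 q; linarith
    · have := hπ'.1.1 q; have := hpos q hqQ; linarith

lemma cyclical_mono (G : SimpleGraph V) (f₀ f₁ : V →₀ ℝ)
    (h₀ : IsProb f₀) (h₁ : IsProb f₁) (q : ℕ) (Q : ℕ → V × V)
    (hQ : ∀ i < q, Q i ∈ commonSupport G f₀ f₁) :
    ∑ i ∈ Finset.range q, (G.dist (Q i).1 (Q i).2 : ℝ) ≤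
      ∑ i ∈ Finset.range q, (G.dist (Q i).1 ((Q (if i = 0 then q - 1 else i - 1)).2) : ℝ) := by
  rcases Nat.eq_zero_or_pos q with rfl | hq
  · simp
  set pred : ℕ → ℕ := fun i => if i = 0 then q - 1 else i - 1 with hpred
  set pr : ℕ → V × V := fun i => ((Q i).1, (Q (pred i)).2) with hpr
  obtain ⟨π, hπ, hpos⟩ := exists_optimal_with_support G f₀ f₁ h₀ h₁
    ((Finset.range q).image Q) (by
      intro p hp
      obtain ⟨i, hi, rfl⟩ := Finset.mem_image.mp (by exact_mod_cast hp)
      exact hQ i (Finset.mem_range.mp hi))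
  have hpos' : ∀ i < q, 0 < π (Q i) := fun i hi =>
    hpos _ (Finset.mem_image_of_mem Q (Finset.mem_range.mpr hi))
  have hrne : (Finset.range q).Nonempty := Finset.nonempty_range_iff.mpr (by omega)
  set m : ℝ := (Finset.range q).inf' hrne fun i => π (Q i) with hm
  have hmpos : 0 < m := by
    obtain ⟨i, hi, he⟩ := Finset.exists_mem_eq_inf' hrne fun i => π (Q i)
    rw [hm, he]
    exact hpos' i (Finset.mem_range.mp hi)
  set ε : ℝ := m / q with hε
  have hεpos : 0 < ε := div_pos hmpos (by exact_mod_cast hq)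
  have hbound : ∀ p, (∑ i ∈ Finset.range q, if Q i = p then ε else 0) ≤ π p := by
    intro p
    by_cases hex : ∃ i ∈ Finset.range q, Q i = p
    · obtain ⟨i, hi, rfl⟩ := hex
      calc (∑ j ∈ Finset.range q, if Q j = Q i then ε else 0)
          ≤ ∑ _j ∈ Finset.range q, ε :=
            Finset.sum_le_sum fun j _ => by
              by_cases hj : Q j = Q i <;> simp [hj, le_of_lt hεpos]
        _ = q * ε := by rw [Finset.sum_const, Finset.card_range, nsmul_eq_mul]
        _ = m := by rw [hε]; field_simp
        _ ≤ π (Q i) := Finset.inf'_le _ hi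
    · push_neg at hex
      rw [Finset.sum_congr rfl fun i hi => if_neg (hex i hi), Finset.sum_const_zero]
      exact hπ.1.1 p
  set σ : V × V →₀ ℝ := ∑ i ∈ Finset.range q, Finsupp.single (pr i) ε with hσ
  set τ : V × V →₀ ℝ := ∑ i ∈ Finset.range q, Finsupp.single (Q i) ε with hτ
  set π' : V × V →₀ ℝ := π + σ - τ with hπ'
  have happly : ∀ p, π' p = π p + (∑ i ∈ Finset.range q, if pr i = p then ε else 0)
      - (∑ i ∈ Finset.range q, if Q i = p then ε else 0) := by
    intro p
    rw [hπ', Finsupp.sub_apply, Finsupp.add_apply, hσ, hτ,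
      Finsupp.finset_sum_apply, Finsupp.finset_sum_apply]
    congr 1
    · congr 1
      exact Finset.sum_congr rfl fun i _ => Finsupp.single_apply
    · exact Finset.sum_congr rfl fun i _ => Finsupp.single_apply
  have hcoup : IsCoupling f₀ f₁ π' := by
    rw [isCoupling_iff]
    obtain ⟨hn, hm1, hm2⟩ := isCoupling_iff.mp hπ.1
    refine ⟨fun p => ?_, fun x => ?_, fun y => ?_⟩
    · rw [happly p]
      have h1 : (0:ℝ) ≤ ∑ i ∈ Finset.range q, if pr i = p then ε else 0 :=
        Finset.sum_nonneg fun i _ => by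
          by_cases hip : pr i = p <;> simp [hip, le_of_lt hεpos]
      have h2 := hbound p
      linarith
    · rw [hπ', map_sub, map_add, hm1, hσ, hτ, map_sum, map_sum]
      have e1 : ∀ a : V × V, lmarg1 x (Finsupp.single a ε) = if a.1 = x then ε else 0 := by
        intro a
        rw [lmarg1_apply, Finsupp.sum_single_index (by simp)]
      rw [Finset.sum_congr rfl fun i _ => e1 (pr i), Finset.sum_congr rfl fun i _ => e1 (Q i)]
      have : ∀ i, (pr i).1 = (Q i).1 := fun i => rfl
      simp only [this]
      ring
    · rw [hπ', map_sub, map_add, hm2, hσ, hτ, map_sum, map_sum]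
      have e2 : ∀ a : V × V, lmarg2 y (Finsupp.single a ε) = if a.2 = y then ε else 0 := by
        intro a
        rw [lmarg2_apply, Finsupp.sum_single_index (by simp)]
      rw [Finset.sum_congr rfl fun i _ => e2 (pr i), Finset.sum_congr rfl fun i _ => e2 (Q i)]
      have hre : (∑ i ∈ Finset.range q, if (pr i).2 = y then ε else 0)
          = ∑ i ∈ Finset.range q, if (Q i).2 = y then ε else 0 := by
        refine Finset.sum_nbij' (fun i => pred i) (fun j => if j = q - 1 then 0 else j + 1)
          ?_ ?_ ?_ ?_ ?_
        · intro i hi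
          simp only [Finset.mem_range, hpred] at hi ⊢
          split_ifs <;> first | omega | (exfalso; omega) | simp_all
        · intro j hj
          simp only [Finset.mem_range] at hj ⊢
          split_ifs <;> first | omega | (exfalso; omega) | simp_all
        · intro i hi
          simp only [Finset.mem_range] at hi
          simp only [hpred]
          split_ifs <;> first | omega | (exfalso; omega) | simp_all
        · intro j hj
          simp only [Finset.mem_range] at hj
          simp only [hpred]
          split_ifs <;> first | omega | (exfalso; omega) | simp_all
        · intro i hi
          rfl
      rw [hre]
      ring
  have hlc : ∀ a : V × V, lcost G (Finsupp.single a ε) = (G.dist a.1 a.2 : ℝ) * ε := by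
    intro a
    rw [lcost, Finsupp.lsum_apply, Finsupp.sum_single_index (by simp)]
    simp [smul_eq_mul]
  have hcost' : gcost G π' = gcost G π
      + ((∑ i ∈ Finset.range q, (G.dist (pr i).1 (pr i).2 : ℝ)) * ε
        - (∑ i ∈ Finset.range q, (G.dist (Q i).1 (Q i).2 : ℝ)) * ε) := by
    rw [← lcost_apply, hπ', map_sub, map_add, hσ, hτ, map_sum, map_sum, lcost_apply,
      Finset.sum_congr rfl fun i _ => hlc (pr i), Finset.sum_congr rfl fun i _ => hlc (Q i),
      ← Finset.sum_mul, ← Finset.sum_mul]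
    ring
  have hle := hπ.2 π' hcoup
  rw [hcost'] at hle
  have hprid : ∀ i, (G.dist (pr i).1 (pr i).2 : ℝ) = (G.dist (Q i).1 ((Q (pred i)).2) : ℝ) :=
    fun i => rfl
  have hS : (∑ i ∈ Finset.range q, (G.dist (pr i).1 (pr i).2 : ℝ))
      = ∑ i ∈ Finset.range q, (G.dist (Q i).1 ((Q (pred i)).2) : ℝ) :=
    Finset.sum_congr rfl fun i _ => hprid i
  by_contra hlt
  push_neg at hlt
  rw [← hS] at hlt
  nlinarith [mul_pos (sub_pos.mpr hlt) hεpos, hle]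

end TF

namespace TF

open Finset

variable {V : Type*}

def prevB (r : V) (c : ℕ → V × V) : ℕ → V := fun i => if i = 0 then r else (c (i - 1)).2

def chainVal (G : SimpleGraph V) (r : V) (m : ℕ) (c : ℕ → V × V) (x : V) : ℝ :=
  (∑ i ∈ Finset.range m,
    ((G.dist (prevB r c i) (c i).1 : ℝ) - (G.dist (c i).1 (c i).2 : ℝ)))
  + (G.dist (prevB r c m) x : ℝ)

def chainSet (G : SimpleGraph V) (Γf : Finset (V × V)) (r : V) (x : V) : Set ℝ :=
  {v | ∃ m, m ≤ Γf.card ∧ ∃ c : ℕ → V × V, (∀ i < m, c i ∈ Γf) ∧ chainVal G r m c x = v}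

def phi (G : SimpleGraph V) (Γf : Finset (V × V)) (r : V) (x : V) : ℝ :=
  sInf (chainSet G Γf r x)

section PhiLemmas

variable (G : SimpleGraph V) (Γf : Finset (V × V)) (r : V)

lemma prevB_congr {m : ℕ} {c c' : ℕ → V × V} (h : ∀ i < m, c i = c' i) :
    ∀ i ≤ m, prevB r c i = prevB r c' i := by
  intro i hi
  rw [prevB, prevB]
  by_cases h0 : i = 0
  · simp [h0]
  · rw [if_neg h0, if_neg h0, h (i - 1) (by omega)]

lemma chainVal_congr {m : ℕ} {c c' : ℕ → V × V} (x : V) (h : ∀ i < m, c i = c' i) :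
    chainVal G r m c x = chainVal G r m c' x := by
  rw [chainVal, chainVal, prevB_congr r h m le_rfl]
  congr 1
  refine Finset.sum_congr rfl fun i hi => ?_
  rw [Finset.mem_range] at hi
  rw [prevB_congr r h i (by omega), h i hi]

lemma chainSet_nonempty (x : V) : (chainSet G Γf r x).Nonempty :=
  ⟨chainVal G r 0 (fun _ => (r, r)) x, 0, Nat.zero_le _, fun _ => (r, r),
    by intro i hi; omega, rfl⟩

lemma chainSet_finite (x : V) : (chainSet G Γf r x).Finite := by
  classical
  set M := Γf.card with hM
  set Γ' : Finset (V × V) := insert (r, r) Γf with hΓ'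
  set Φ : (Fin (M + 1) × (Fin M → ↥Γ')) → ℝ := fun mu =>
    chainVal G r ↑mu.1 (fun k => if h : k < M then ↑(mu.2 ⟨k, h⟩) else (r, r)) x with hΦ
  refine Set.Finite.subset (Set.finite_range Φ) ?_
  rintro v ⟨m, hm, c, hc, rfl⟩
  set u : Fin M → ↥Γ' := fun t =>
    if h : (t : ℕ) < m then ⟨c ↑t, Finset.mem_insert_of_mem (hc _ h)⟩
    else ⟨(r, r), Finset.mem_insert_self _ _⟩ with hu
  refine ⟨(⟨m, by omega⟩, u), ?_⟩
  rw [hΦ]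
  refine chainVal_congr G r x ?_
  intro i hi
  simp only at hi ⊢
  have hiM : i < M := by omega
  rw [dif_pos hiM, hu]
  simp only
  rw [dif_pos hi]

lemma chain_shorten
    (hCM : ∀ (q : ℕ) (Q : ℕ → V × V), (∀ i < q, Q i ∈ Γf) →
      ∑ i ∈ Finset.range q, (G.dist (Q i).1 (Q i).2 : ℝ) ≤
        ∑ i ∈ Finset.range q, (G.dist (Q i).1 ((Q (if i = 0 then q - 1 else i - 1)).2) : ℝ))
    (x : V) :
    ∀ (m : ℕ) (c : ℕ → V × V), (∀ i < m, c i ∈ Γf) →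
      ∃ v ∈ chainSet G Γf r x, v ≤ chainVal G r m c x := by
  intro m
  induction m using Nat.strong_induction_on with
  | _ m IH =>
    intro c hc
    by_cases hm : m ≤ Γf.card
    · exact ⟨chainVal G r m c x, ⟨m, hm, c, hc, rfl⟩, le_rfl⟩
    push_neg at hm
    obtain ⟨i₀, hi₀, j₀, hj₀, hne, hceq⟩ :=
      Finset.exists_ne_map_eq_of_card_lt_of_maps_to
        (by rwa [Finset.card_range]) (fun i hi => hc i (Finset.mem_range.mp hi))
    obtain ⟨i, j, hij, hjm, hcij⟩ : ∃ i j, i < j ∧ j < m ∧ c i = c j := by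
      rcases lt_or_gt_of_ne hne with h | h
      · exact ⟨i₀, j₀, h, Finset.mem_range.mp hj₀, hceq⟩
      · exact ⟨j₀, i₀, h, Finset.mem_range.mp hi₀, hceq.symm⟩
    set q := j - i with hqdef
    have hq0 : 0 < q := by omega
    set m' := m - q with hm'def
    have him' : i < m' := by omega
    have hm'm : m' < m := by omega
    set c' : ℕ → V × V := fun k => if k ≤ i then c k else c (k + q) with hc'def
    have hc'i : ∀ k, k ≤ i → c' k = c k := fun k hk => if_pos hk
    have hc'g : ∀ k, ¬ k ≤ i → c' k = c (k + q) := fun k hk => if_neg hk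
    have hmem' : ∀ k < m', c' k ∈ Γf := by
      intro k hk
      by_cases hki : k ≤ i
      · rw [hc'i k hki]; exact hc k (by omega)
      · rw [hc'g k hki]; exact hc (k + q) (by omega)
    have hprev1 : ∀ k, k ≤ i → prevB r c' k = prevB r c k := by
      intro k hk
      rw [prevB, prevB]
      by_cases h0 : k = 0
      · simp [h0]
      · rw [if_neg h0, if_neg h0, hc'i (k - 1) (by omega)]
    have hprev2 : ∀ k, i < k → prevB r c' k = prevB r c (k + q) := by
      intro k hk
      rw [prevB, prevB]
      rw [if_neg (by omega : ¬ k = 0), if_neg (by omega : ¬ k + q = 0)]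
      by_cases hk1 : k - 1 ≤ i
      · rw [hc'i (k - 1) hk1]
        have e1 : k - 1 = i := by omega
        rw [e1, hcij]
        have e2 : j = k + q - 1 := by omega
        rw [e2]
      · rw [hc'g (k - 1) hk1]
        have e3 : k - 1 + q = k + q - 1 := by omega
        rw [e3]
    set F : ℕ → ℝ := fun k =>
      (G.dist (prevB r c k) (c k).1 : ℝ) - (G.dist (c k).1 (c k).2 : ℝ) with hF
    set F' : ℕ → ℝ := fun k =>
      (G.dist (prevB r c' k) (c' k).1 : ℝ) - (G.dist (c' k).1 (c' k).2 : ℝ) with hF'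
    have hval : chainVal G r m c x = (∑ k ∈ Finset.range m, F k)
        + (G.dist (prevB r c m) x : ℝ) := rfl
    have hval' : chainVal G r m' c' x = (∑ k ∈ Finset.range m', F' k)
        + (G.dist (prevB r c' m') x : ℝ) := rfl
    have he1 : ∀ k ∈ Finset.range (i + 1), F' k = F k := by
      intro k hk
      rw [Finset.mem_range] at hk
      have hki : k ≤ i := by omega
      rw [hF', hF]
      simp only
      rw [hc'i k hki, hprev1 k hki]
    have he2 : ∀ k ∈ Finset.Ico (i + 1) m', F' k = F (k + q) := by
      intro k hk
      rw [Finset.mem_Ico] at hk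
      have hki : ¬ k ≤ i := by omega
      rw [hF', hF]
      simp only
      rw [hc'g k hki, hprev2 k (by omega)]
    have hsplit : ∑ k ∈ Finset.range m, F k
        = (∑ k ∈ Finset.range (i + 1), F k) + ((∑ k ∈ Finset.Ico (i + 1) (j + 1), F k)
          + ∑ k ∈ Finset.Ico (j + 1) m, F k) := by
      rw [Finset.range_eq_Ico,
        ← Finset.sum_Ico_consecutive F (by omega : 0 ≤ i + 1) (by omega : i + 1 ≤ m),
        ← Finset.sum_Ico_consecutive F (by omega : i + 1 ≤ j + 1) (by omega : j + 1 ≤ m),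
        ← Finset.range_eq_Ico]
    have hsplit' : ∑ k ∈ Finset.range m', F' k
        = (∑ k ∈ Finset.range (i + 1), F' k) + ∑ k ∈ Finset.Ico (i + 1) m', F' k := by
      rw [Finset.range_eq_Ico,
        ← Finset.sum_Ico_consecutive F' (by omega : 0 ≤ i + 1) (by omega : i + 1 ≤ m'),
        ← Finset.range_eq_Ico]
    have hshift : ∑ k ∈ Finset.Ico (i + 1) m', F (k + q) = ∑ k ∈ Finset.Ico (j + 1) m, F k := by
      rw [Finset.sum_Ico_add' F (i + 1) m' q, (by omega : i + 1 + q = j + 1),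
        (by omega : m' + q = m)]
    have hrem0 : 0 ≤ ∑ k ∈ Finset.Ico (i + 1) (j + 1), F k := by
      have hrem : ∑ k ∈ Finset.Ico (i + 1) (j + 1), F k
          = (∑ t ∈ Finset.range q,
              (G.dist ((c (i + 1 + t)).1) ((c (i + 1 + (if t = 0 then q - 1 else t - 1))).2) : ℝ))
            - ∑ t ∈ Finset.range q, (G.dist ((c (i + 1 + t)).1) ((c (i + 1 + t)).2) : ℝ) := by
        rw [Finset.sum_Ico_eq_sum_range]
        have e4 : j + 1 - (i + 1) = q := by omega
        rw [e4, ← Finset.sum_sub_distrib]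
        refine Finset.sum_congr rfl fun t ht => ?_
        rw [Finset.mem_range] at ht
        rw [hF]
        simp only
        have hprevt : prevB r c (i + 1 + t) = (c (i + 1 + (if t = 0 then q - 1 else t - 1))).2 := by
          rw [prevB]
          rw [if_neg (by omega : ¬ i + 1 + t = 0)]
          by_cases ht0 : t = 0
          · rw [if_pos ht0, (by omega :i + 1 + t - 1 = i), hcij, (by omega : i + 1 + (q - 1) = j)]
          · rw [if_neg ht0, (by omega : i + 1 + t - 1 = i + 1 + (t - 1))]
        rw [hprevt, SimpleGraph.dist_comm]
      have hmems : ∀ t < q, (fun t => c (i + 1 + t)) t ∈ Γf := by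
        intro t ht
        exact hc (i + 1 + t) (by omega)
      have hcm := hCM q (fun t => c (i + 1 + t)) hmems
      rw [hrem]
      linarith
    have hkey : chainVal G r m' c' x ≤ chainVal G r m c x := by
      rw [hval, hval', hsplit, hsplit',
        Finset.sum_congr rfl he1, Finset.sum_congr rfl he2, hshift,
        hprev2 m' him', (by omega : m' + q = m)]
      linarith
    obtain ⟨v, hvmem, hvle⟩ := IH m' hm'm c' hmem'
    exact ⟨v, hvmem, hvle.trans hkey⟩

end PhiLemmas

end TF

namespace TF

open Finset

variable {V : Type*}

section PhiLemmas2

variable {G : SimpleGraph V} {Γf : Finset (V × V)} {r : V}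

variable (hCM : ∀ (q : ℕ) (Q : ℕ → V × V), (∀ i < q, Q i ∈ Γf) →
      ∑ i ∈ Finset.range q, (G.dist (Q i).1 (Q i).2 : ℝ) ≤
        ∑ i ∈ Finset.range q, (G.dist (Q i).1 ((Q (if i = 0 then q - 1 else i - 1)).2) : ℝ))

include hCM

lemma phi_le {m : ℕ} {c : ℕ → V × V} {x : V} (hc : ∀ i < m, c i ∈ Γf) :
    phi G Γf r x ≤ chainVal G r m c x := by
  obtain ⟨v, hv, hle⟩ := chain_shorten G Γf r hCM x m c hc
  exact le_trans (csInf_le (chainSet_finite G Γf r x).bddBelow hv) hle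

omit hCM

lemma phi_mem (x : V) : phi G Γf r x ∈ chainSet G Γf r x :=
  (chainSet_nonempty G Γf r x).csInf_mem (chainSet_finite G Γf r x)

include hCM

lemma phi_lip (hconn : G.Connected) (x y : V) :
    phi G Γf r y ≤ phi G Γf r x + (G.dist x y : ℝ) := by
  obtain ⟨m, hm, c, hc, hval⟩ := phi_mem (G := G) (Γf := Γf) (r := r) x
  have htri : (G.dist (prevB r c m) y : ℝ) ≤ (G.dist (prevB r c m) x : ℝ) + (G.dist x y : ℝ) := by
    exact_mod_cast hconn.dist_triangle (u := prevB r c m) (v := x) (w := y)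
  have h2 : chainVal G r m c y ≤ chainVal G r m c x + (G.dist x y : ℝ) := by
    rw [chainVal, chainVal]
    linarith
  calc phi G Γf r y ≤ chainVal G r m c y := phi_le hCM hc
    _ ≤ chainVal G r m c x + (G.dist x y : ℝ) := h2
    _ = phi G Γf r x + (G.dist x y : ℝ) := by rw [hval]

lemma phi_drop {a b : V} (hab : (a, b) ∈ Γf) :
    phi G Γf r b ≤ phi G Γf r a - (G.dist a b : ℝ) := by
  obtain ⟨m, hm, c, hc, hval⟩ := phi_mem (G := G) (Γf := Γf) (r := r) a
  set c' : ℕ → V × V := fun k => if k = m then (a, b) else c k with hc'def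
  have hc'lt : ∀ k, k < m → c' k = c k := fun k hk => if_neg (by omega)
  have hc'm : c' m = (a, b) := if_pos rfl
  have hc' : ∀ i < m + 1, c' i ∈ Γf := by
    intro k hk
    by_cases hkm : k = m
    · rw [hkm, hc'm]; exact hab
    · rw [hc'lt k (by omega)]; exact hc k (by omega)
  have hprev : ∀ k, k ≤ m → prevB r c' k = prevB r c k := by
    intro k hk
    rw [prevB, prevB]
    by_cases h0 : k = 0
    · simp [h0]
    · rw [if_neg h0, if_neg h0, hc'lt (k - 1) (by omega)]
  have hval' : chainVal G r (m + 1) c' b = chainVal G r m c a - (G.dist a b : ℝ) := by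
    rw [chainVal, chainVal, Finset.sum_range_succ]
    have hfin : prevB r c' (m + 1) = b := by
      rw [prevB, if_neg (by omega : ¬ m + 1 = 0), (by omega : m + 1 - 1 = m), hc'm]
    rw [hfin, SimpleGraph.dist_self]
    have hterm : (G.dist (prevB r c' m) (c' m).1 : ℝ) - (G.dist (c' m).1 (c' m).2 : ℝ)
        = (G.dist (prevB r c m) a : ℝ) - (G.dist a b : ℝ) := by
      rw [hc'm, hprev m le_rfl]
    have hsum : ∑ i ∈ Finset.range m,
        ((G.dist (prevB r c' i) (c' i).1 : ℝ) - (G.dist (c' i).1 (c' i).2 : ℝ))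
        = ∑ i ∈ Finset.range m,
        ((G.dist (prevB r c i) (c i).1 : ℝ) - (G.dist (c i).1 (c i).2 : ℝ)) := by
      refine Finset.sum_congr rfl fun k hk => ?_
      rw [Finset.mem_range] at hk
      rw [hc'lt k hk, hprev k (by omega)]
    rw [hterm, hsum]
    push_cast
    ring
  calc phi G Γf r b ≤ chainVal G r (m + 1) c' b := phi_le hCM hc'
    _ = chainVal G r m c a - (G.dist a b : ℝ) := hval'
    _ = phi G Γf r a - (G.dist a b : ℝ) := by rw [hval]

lemma phi_diff (hconn : G.Connected) {a b : V} (hab : (a, b) ∈ Γf) :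
    phi G Γf r a - phi G Γf r b = (G.dist a b : ℝ) := by
  have h1 := phi_drop (r := r) hCM hab
  have h2 := phi_lip (r := r) hCM hconn b a
  rw [SimpleGraph.dist_comm (u := b) (v := a)] at h2
  linarith

end PhiLemmas2

end TF

namespace TF

open Finset

variable {V : Type*}

lemma ball_finite (G : SimpleGraph V) (hconn : G.Connected) [G.LocallyFinite] (a : V) :
    ∀ R : ℕ, {x | G.dist a x ≤ R}.Finite := by
  intro R
  induction R with
  | zero =>
    refine Set.Finite.subset (Set.finite_singleton a) fun x hx => ?_
    simp only [Set.mem_setOf_eq, Nat.le_zero] at hx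
    have : a = x := (hconn.dist_eq_zero_iff).mp hx
    simp [this]
  | succ R IH =>
    have hsub : {x | G.dist a x ≤ R + 1} ⊆
        {x | G.dist a x ≤ R} ∪ ⋃ y ∈ {x | G.dist a x ≤ R}, G.neighborSet y := by
      intro x hx
      simp only [Set.mem_setOf_eq] at hx
      by_cases hR : G.dist a x ≤ R
      · exact Or.inl hR
      · have hd : G.dist a x = R + 1 := by omega
        have hne : x ≠ a := by
          intro h
          rw [h, SimpleGraph.dist_self] at hd
          omega
        obtain ⟨p, hp⟩ := (hconn.preconnected a x).exists_walk_length_eq_dist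
        obtain ⟨y, hadj, p', hp'⟩ := SimpleGraph.Walk.exists_eq_cons_of_ne hne p.reverse
        have hlen : p'.length = R := by
          have h1 : p.reverse.length = R + 1 := by rw [SimpleGraph.Walk.length_reverse, hp, hd]
          rw [hp', SimpleGraph.Walk.length_cons] at h1
          omega
        have hdy : G.dist a y ≤ R := by
          have := SimpleGraph.dist_le p'.reverse
          rwa [SimpleGraph.Walk.length_reverse, hlen] at this
        refine Or.inr (Set.mem_biUnion hdy ?_)
        exact hadj.symm
    exact Set.Finite.subset (IH.union (Set.Finite.biUnion IH fun y _ => (G.neighborSet y).toFinite))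
      hsub

lemma geodesic_dist_le (G : SimpleGraph V) (hconn : G.Connected) {γ : ℕ → V} {n : ℕ}
    (hγ : IsGeodesic G γ n) : ∀ i ≤ n, G.dist (γ 0) (γ i) ≤ i := by
  intro i
  induction i with
  | zero => intro _; simp [SimpleGraph.dist_self]
  | succ i IH =>
    intro hi
    have h1 := IH (by omega)
    have h2 : G.dist (γ i) (γ (i + 1)) = 1 :=
      SimpleGraph.dist_eq_one_iff_adj.mpr (hγ.1 i (by omega))
    calc G.dist (γ 0) (γ (i + 1)) ≤ G.dist (γ 0) (γ i) + G.dist (γ i) (γ (i + 1)) :=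
          hconn.dist_triangle
      _ ≤ i + 1 := by omega

lemma all_eq_one {n : ℕ} {t : ℕ → ℝ} (hle : ∀ i ∈ Finset.range n, t i ≤ 1)
    (hsum : ∑ i ∈ Finset.range n, t i = n) : ∀ i ∈ Finset.range n, t i = 1 := by
  have h0 : ∑ i ∈ Finset.range n, (1 - t i) = 0 := by
    rw [Finset.sum_sub_distrib, hsum]
    simp
  have h1 := (Finset.sum_eq_zero_iff_of_nonneg
    (fun i hi => by linarith [hle i hi])).mp h0
  intro i hi
  have := h1 i hi
  linarith

lemma sum_phi_fst {K : Finset V} (φ : V → ℝ) {f₀' f₁' : V →₀ ℝ} {π : V × V →₀ ℝ}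
    (hπ : IsCoupling f₀' f₁' π) (hs : f₀'.support ⊆ K) :
    ∑ x ∈ K, φ x * f₀' x = ∑ p ∈ π.support, φ p.1 * π p := by
  have hstep : ∀ x ∈ K, φ x * f₀' x
      = ∑ p ∈ π.support, (if p.1 = x then φ x * π p else 0) := by
    intro x _
    rw [← hπ.2.1 x, Finsupp.sum, Finset.mul_sum]
    exact Finset.sum_congr rfl fun p _ => by
      by_cases h : p.1 = x <;> simp [h]
  rw [Finset.sum_congr rfl hstep, Finset.sum_comm]
  refine Finset.sum_congr rfl fun p hp => ?_
  have hp1 : p.1 ∈ K := hs (coup_fst_mem hπ (Finsupp.mem_support_iff.mp hp))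
  rw [Finset.sum_ite_eq K p.1 (fun x => φ x * π p), if_pos hp1]

lemma sum_phi_snd {K : Finset V} (φ : V → ℝ) {f₀' f₁' : V →₀ ℝ} {π : V × V →₀ ℝ}
    (hπ : IsCoupling f₀' f₁' π) (hs : f₁'.support ⊆ K) :
    ∑ x ∈ K, φ x * f₁' x = ∑ p ∈ π.support, φ p.2 * π p := by
  have hstep : ∀ x ∈ K, φ x * f₁' x
      = ∑ p ∈ π.support, (if p.2 = x then φ x * π p else 0) := by
    intro x _
    rw [← hπ.2.2 x, Finsupp.sum, Finset.mul_sum]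
    exact Finset.sum_congr rfl fun p _ => by
      by_cases h : p.2 = x <;> simp [h]
  rw [Finset.sum_congr rfl hstep, Finset.sum_comm]
  refine Finset.sum_congr rfl fun p hp => ?_
  have hp2 : p.2 ∈ K := hs (coup_snd_mem hπ (Finsupp.mem_support_iff.mp hp))
  rw [Finset.sum_ite_eq K p.2 (fun x => φ x * π p), if_pos hp2]

lemma gcost_eq_support_sum (G : SimpleGraph V) (π : V × V →₀ ℝ) :
    gcost G π = ∑ p ∈ π.support, (G.dist p.1 p.2 : ℝ) * π p := rfl

end TF


open scoped Topology

open Finset in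
theorem total_flux_eq_W1
    (G : SimpleGraph V) (hconn : G.Connected) [G.LocallyFinite]
    (f₀ f₁ : V →₀ ℝ) (h₀ : IsProb f₀) (h₁ : IsProb f₁)
    (f : ℝ → V →₀ ℝ) (hf0 : f 0 = f₀) (hf1 : f 1 = f₁)
    (hprob : ∀ t ∈ Set.Icc (0 : ℝ) 1, IsProb (f t))
    (hW : ∀ s t : ℝ, 0 ≤ s → s ≤ t → t ≤ 1 → W1 G (f s) (f t) = (t - s) * W1 G f₀ f₁)
    (T : SimpleGraph V) (hTG : T ≤ G) (hT : T.IsTree)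
    (g : ℝ → V × V → ℝ)
    (hgsupp : ∀ t p, g t p ≠ 0 → OrientedEdge G f₀ f₁ p.1 p.2 ∧ T.Adj p.1 p.2)
    (hgpos : ∀ t p, 0 ≤ g t p)
    (hdiv : ∀ (x : V), ∀ t ∈ Set.Icc (0 : ℝ) 1,
      HasDerivAt (fun s => f s x) (-((∑ᶠ y, g t (x, y)) - ∑ᶠ z, g t (z, x))) t)
    (t : ℝ) (ht : t ∈ Set.Icc (0 : ℝ) 1) :
    ∑ᶠ p : V × V, g t p = W1 G f₀ f₁ := by
  classical
  set W := W1 G f₀ f₁ with hWdef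
  have hΓmem : ∀ p ∈ commonSupport G f₀ f₁, p.1 ∈ f₀.support ∧ p.2 ∈ f₁.support := by
    rintro p ⟨π, hopt, hp⟩
    exact ⟨TF.coup_fst_mem hopt.1 (ne_of_gt hp), TF.coup_snd_mem hopt.1 (ne_of_gt hp)⟩
  set Γf : Finset (V × V) :=
    (f₀.support ×ˢ f₁.support).filter (· ∈ commonSupport G f₀ f₁) with hΓf
  have hΓfiff : ∀ p, p ∈ Γf ↔ p ∈ commonSupport G f₀ f₁ := by
    intro p
    rw [hΓf, Finset.mem_filter]
    exact ⟨fun h => h.2, fun h => ⟨Finset.mem_product.mpr (hΓmem p h), h⟩⟩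
  have hCM : ∀ (q : ℕ) (Q : ℕ → V × V), (∀ i < q, Q i ∈ Γf) →
      ∑ i ∈ Finset.range q, (G.dist (Q i).1 (Q i).2 : ℝ) ≤
        ∑ i ∈ Finset.range q, (G.dist (Q i).1 ((Q (if i = 0 then q - 1 else i - 1)).2) : ℝ) :=
    fun q Q hQ => TF.cyclical_mono G f₀ f₁ h₀ h₁ q Q fun i hi => (hΓfiff _).mp (hQ i hi)
  have hs0ne : f₀.support.Nonempty := by
    by_contra hne
    rw [Finset.not_nonempty_iff_eq_empty] at hne
    have h2 := h₀.2
    rw [Finsupp.sum, hne, Finset.sum_empty] at h2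
    norm_num at h2
  obtain ⟨r, hr⟩ := hs0ne
  set φ : V → ℝ := TF.phi G Γf r with hφ
  have hφlip : ∀ x y, φ y ≤ φ x + (G.dist x y : ℝ) := by
    intro x y
    simp only [hφ]
    exact TF.phi_lip hCM hconn x y
  have hφdiff : ∀ a b, (a, b) ∈ Γf → φ a - φ b = (G.dist a b : ℝ) := by
    intro a b hab
    simp only [hφ]
    exact TF.phi_diff hCM hconn hab
  set D : ℕ := (f₀.support ×ˢ f₁.support).sup (fun p => G.dist p.1 p.2) with hD
  have hDle : ∀ p ∈ commonSupport G f₀ f₁, G.dist p.1 p.2 ≤ D :=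
    fun p hp => Finset.le_sup (f := fun q : V × V => G.dist q.1 q.2) (Finset.mem_product.mpr (hΓmem p hp))
  have hKfin : (⋃ a ∈ (f₀.support : Set V), {x | G.dist a x ≤ D}).Finite :=
    Set.Finite.biUnion f₀.support.finite_toSet fun a _ => TF.ball_finite G hconn a D
  set K : Finset V := hKfin.toFinset with hK
  have hKmem : ∀ x, x ∈ K ↔ ∃ a ∈ f₀.support, G.dist a x ≤ D := by
    intro x
    rw [hK, Set.Finite.mem_toFinset]
    simp
  have hsupp0K : f₀.support ⊆ K := fun a ha =>
    (hKmem a).mpr ⟨a, ha, by rw [SimpleGraph.dist_self]; omega⟩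
  have horiK : ∀ x y, OrientedEdge G f₀ f₁ x y → x ∈ K ∧ y ∈ K := by
    rintro x y ⟨γ, n, k, hγ, hep, hkn, hx, hy⟩
    have ha : (γ 0) ∈ f₀.support := (hΓmem _ hep).1
    have hnD : n ≤ D := by
      have h1 := hDle _ hep
      simp only at h1
      rwa [hγ.2] at h1
    constructor
    · refine (hKmem x).mpr ⟨γ 0, ha, ?_⟩
      rw [← hx]
      exact le_trans (TF.geodesic_dist_le G hconn hγ k (by omega)) (by omega)
    · refine (hKmem y).mpr ⟨γ 0, ha, ?_⟩
      rw [← hy]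
      exact le_trans (TF.geodesic_dist_le G hconn hγ (k + 1) (by omega)) (by omega)
  have hgK : ∀ s (p : V × V), g s p ≠ 0 → p.1 ∈ K ∧ p.2 ∈ K :=
    fun s p hp => horiK p.1 p.2 (hgsupp s p hp).1
  have hgrow : ∀ (s : ℝ) (x : V), x ∉ K → (∑ᶠ y, g s (x, y)) = 0 := by
    intro s x hx
    have he : (fun y => g s (x, y)) = fun _ => 0 := by
      funext y
      by_contra hne
      exact hx (hgK s (x, y) hne).1
    rw [he, finsum_zero]
  have hgcol : ∀ (s : ℝ) (x : V), x ∉ K → (∑ᶠ z, g s (z, x)) = 0 := by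
    intro s x hx
    have he : (fun z => g s (z, x)) = fun _ => 0 := by
      funext z
      by_contra hne
      exact hx (hgK s (z, x) hne).2
    rw [he, finsum_zero]
  have houtside : ∀ x ∉ K, ∀ s ∈ Set.Icc (0 : ℝ) 1, f s x = 0 := by
    intro x hx s hs
    have hzero : ∀ u ∈ Set.Icc (0 : ℝ) 1,
        HasDerivWithinAt (fun v => f v x) ((fun _ : ℝ => (0 : ℝ)) u) (Set.Icc (0 : ℝ) 1) u := by
      intro u hu
      have h := hdiv x u hu
      rw [hgrow u x hx, hgcol u x hx] at h
      simpa using h.hasDerivWithinAt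
    have hb := (convex_Icc (0 : ℝ) 1).norm_image_sub_le_of_norm_hasDerivWithin_le
      (C := 0) hzero (fun u _ => by simp) (Set.left_mem_Icc.mpr zero_le_one) hs
    have hf0x : f 0 x = 0 := by
      rw [hf0]
      exact Finsupp.notMem_support_iff.mp fun hmem => hx (hsupp0K hmem)
    rw [hf0x, sub_zero, zero_mul] at hb
    exact norm_le_zero_iff.mp hb
  have hsuppfs : ∀ s ∈ Set.Icc (0 : ℝ) 1, (f s).support ⊆ K := by
    intro s hs x hx
    by_contra hxK
    exact (Finsupp.mem_support_iff.mp hx) (houtside x hxK s hs)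
  set H : ℝ → ℝ := fun s => ∑ x ∈ K, φ x * f s x with hH
  set Dv : ℝ → ℝ := fun s =>
    ∑ x ∈ K, φ x * (-((∑ᶠ y, g s (x, y)) - ∑ᶠ z, g s (z, x))) with hDv
  have hHd : ∀ s ∈ Set.Icc (0 : ℝ) 1, HasDerivAt H (Dv s) s := by
    intro s hs
    simp only [hH, hDv]
    exact HasDerivAt.fun_sum fun x _ => (hdiv x s hs).const_mul (φ x)
  have hHlip : ∀ s u, s ∈ Set.Icc (0 : ℝ) 1 → u ∈ Set.Icc (0 : ℝ) 1 → s ≤ u →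
      |H u - H s| ≤ (u - s) * W := by
    intro s u hs hu hsu
    have hWsu : W1 G (f s) (f u) = (u - s) * W := hW s u hs.1 hsu hu.2
    have hbound : ∀ π, IsCoupling (f s) (f u) π → |H u - H s| ≤ gcost G π := by
      intro π hπ
      have e1 : H s = ∑ p ∈ π.support, φ p.1 * π p := by
        simp only [hH]
        exact TF.sum_phi_fst φ hπ (hsuppfs s hs)
      have e2 : H u = ∑ p ∈ π.support, φ p.2 * π p := by
        simp only [hH]
        exact TF.sum_phi_snd φ hπ (hsuppfs u hu)
      rw [e1, e2, ← Finset.sum_sub_distrib, TF.gcost_eq_support_sum]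
      calc |∑ p ∈ π.support, (φ p.2 * π p - φ p.1 * π p)|
          ≤ ∑ p ∈ π.support, |φ p.2 * π p - φ p.1 * π p| := Finset.abs_sum_le_sum_abs _ _
        _ ≤ ∑ p ∈ π.support, (G.dist p.1 p.2 : ℝ) * π p := by
            refine Finset.sum_le_sum fun p _ => ?_
            rw [← sub_mul, abs_mul, abs_of_nonneg (hπ.1 p)]
            refine mul_le_mul_of_nonneg_right ?_ (hπ.1 p)
            rw [abs_le]
            constructor
            · have h3 := hφlip p.2 p.1
              rw [SimpleGraph.dist_comm (u := p.2) (v := p.1)] at h3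
              linarith
            · have h3 := hφlip p.1 p.2
              linarith
    obtain ⟨π0, hπ0⟩ : ∃ π, IsCoupling (f s) (f u) π :=
      ⟨TF.prodCoupling (f s) (f u), TF.prodCoupling_isCoupling (hprob s hs) (hprob u hu)⟩
    have hle : |H u - H s| ≤ W1 G (f s) (f u) := by
      refine le_csInf ⟨gcost G π0, π0, hπ0, rfl⟩ ?_
      rintro b ⟨π, hπ, rfl⟩
      exact hbound π hπ
    rwa [hWsu] at hle
  obtain ⟨πo, hπo⟩ := TF.exists_optimalCoupling G f₀ f₁ h₀ h₁
  have hsupp1K : f₁.support ⊆ K := by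
    intro b hb
    have hfb : f₁ b ≠ 0 := Finsupp.mem_support_iff.mp hb
    have hsum_ne : (πo.sum fun p v => if p.2 = b then v else 0) ≠ 0 := by
      rw [hπo.1.2.2 b]; exact hfb
    rw [Finsupp.sum] at hsum_ne
    obtain ⟨p, hpmem, hpne⟩ := Finset.exists_ne_zero_of_sum_ne_zero hsum_ne
    have hp2 : p.2 = b := by
      by_contra hne
      rw [if_neg hne] at hpne
      exact hpne rfl
    have hppos : 0 < πo p :=
      lt_of_le_of_ne (hπo.1.1 p) (Ne.symm (Finsupp.mem_support_iff.mp hpmem))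
    have hpΓ : p ∈ commonSupport G f₀ f₁ := ⟨πo, hπo, hppos⟩
    refine (hKmem b).mpr ⟨p.1, (hΓmem p hpΓ).1, ?_⟩
    rw [← hp2]
    exact hDle p hpΓ
  have hHval : H 0 - H 1 = W := by
    have e0 : H 0 = ∑ p ∈ πo.support, φ p.1 * πo p := by
      simp only [hH, hf0]
      exact TF.sum_phi_fst φ hπo.1 hsupp0K
    have e1 : H 1 = ∑ p ∈ πo.support, φ p.2 * πo p := by
      simp only [hH, hf1]
      exact TF.sum_phi_snd φ hπo.1 hsupp1K
    rw [e0, e1, ← Finset.sum_sub_distrib]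
    have hterm : ∀ p ∈ πo.support, φ p.1 * πo p - φ p.2 * πo p
        = (G.dist p.1 p.2 : ℝ) * πo p := by
      intro p hp
      have hppos : 0 < πo p :=
        lt_of_le_of_ne (hπo.1.1 p) (Ne.symm (Finsupp.mem_support_iff.mp hp))
      have hpΓf : (p.1, p.2) ∈ Γf := by
        rw [Prod.mk.eta]
        exact (hΓfiff p).mpr ⟨πo, hπo, hppos⟩
      rw [← sub_mul, hφdiff p.1 p.2 hpΓf]
    rw [Finset.sum_congr rfl hterm, ← TF.gcost_eq_support_sum, TF.optimal_gcost hπo]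
  have hDvlb : ∀ s ∈ Set.Ioo (0 : ℝ) 1, -W ≤ Dv s := by
    intro s hs
    have hder := hHd s (Set.mem_Icc_of_Ioo hs)
    rw [hasDerivAt_iff_tendsto_slope] at hder
    have hmle : 𝓝[Set.Ioo s 1] s ≤ 𝓝[≠] s :=
      nhdsWithin_mono s fun u hu => ne_of_gt hu.1
    have hder' : Filter.Tendsto (slope H s) (𝓝[Set.Ioo s 1] s) (𝓝 (Dv s)) :=
      hder.mono_left hmle
    haveI hnebot : (𝓝[Set.Ioo s 1] s).NeBot := by
      rw [nhdsWithin_Ioo_eq_nhdsGT hs.2]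
      infer_instance
    refine ge_of_tendsto hder' ?_
    refine Filter.eventually_of_mem self_mem_nhdsWithin fun u hu => ?_
    have h1 := hHlip s u (Set.mem_Icc_of_Ioo hs)
      ⟨by linarith [hs.1, hu.1], le_of_lt hu.2⟩ (le_of_lt hu.1)
    rw [abs_le] at h1
    rw [slope_def_field]
    have hpos : (0 : ℝ) < u - s := by linarith [hu.1]
    rw [le_div_iff₀ hpos]
    have he : -W * (u - s) = -((u - s) * W) := by ring
    rw [he]
    exact h1.1
  set Gm : ℝ → ℝ := fun s => H s + s * W with hGm
  have hGmd : ∀ s ∈ Set.Icc (0 : ℝ) 1, HasDerivAt Gm (Dv s + W) s := by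
    intro s hs
    simp only [hGm]
    exact (hHd s hs).add (hasDerivAt_mul_const W)
  have hGmmono : MonotoneOn Gm (Set.Icc (0 : ℝ) 1) := by
    refine monotoneOn_of_deriv_nonneg (convex_Icc 0 1)
      (fun s hs => (hGmd s hs).continuousAt.continuousWithinAt) ?_ ?_
    · intro s hs
      rw [interior_Icc] at hs
      exact (hGmd s (Set.mem_Icc_of_Ioo hs)).differentiableAt.differentiableWithinAt
    · intro s hs
      rw [interior_Icc] at hs
      rw [(hGmd s (Set.mem_Icc_of_Ioo hs)).deriv]
      have := hDvlb s hs
      linarith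
  have hGm10 : Gm 1 = Gm 0 := by
    simp only [hGm]
    rw [one_mul, zero_mul, add_zero]
    linarith [hHval]
  have hconst : ∀ s ∈ Set.Icc (0 : ℝ) 1, Gm s = Gm 0 := by
    intro s hs
    have h1 : Gm 0 ≤ Gm s := hGmmono (Set.left_mem_Icc.mpr zero_le_one) hs hs.1
    have h2 : Gm s ≤ Gm 1 := hGmmono hs (Set.right_mem_Icc.mpr zero_le_one) hs.2
    rw [hGm10] at h2
    linarith
  have hDt : Dv t + W = 0 := by
    have hu1 : HasDerivWithinAt Gm (Dv t + W) (Set.Icc (0 : ℝ) 1) t :=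
      (hGmd t ht).hasDerivWithinAt
    have hu2 : HasDerivWithinAt Gm 0 (Set.Icc (0 : ℝ) 1) t := by
      have hc : HasDerivWithinAt (fun _ : ℝ => Gm 0) 0 (Set.Icc (0 : ℝ) 1) t :=
        hasDerivWithinAt_const t _ (Gm 0)
      exact hc.congr (fun y hy => hconst y hy) (hconst t ht)
    exact (uniqueDiffOn_Icc one_pos t ht).eq_deriv _ hu1 hu2
  have hrowt : ∀ x ∈ K, (∑ᶠ y, g t (x, y)) = ∑ y ∈ K, g t (x, y) := by
    intro x _
    refine finsum_eq_sum_of_support_subset _ ?_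
    intro y hy
    exact (hgK t (x, y) hy).2
  have hcolt : ∀ x ∈ K, (∑ᶠ z, g t (z, x)) = ∑ z ∈ K, g t (z, x) := by
    intro x _
    refine finsum_eq_sum_of_support_subset _ ?_
    intro z hz
    exact (hgK t (z, x) hz).1
  have hA : ∑ p ∈ K ×ˢ K, φ p.1 * g t p = ∑ x ∈ K, φ x * ∑ y ∈ K, g t (x, y) := by
    rw [Finset.sum_product]
    exact Finset.sum_congr rfl fun x _ => by rw [Finset.mul_sum]
  have hB : ∑ p ∈ K ×ˢ K, φ p.2 * g t p = ∑ x ∈ K, φ x * ∑ z ∈ K, g t (z, x) := by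
    rw [Finset.sum_product, Finset.sum_comm]
    exact Finset.sum_congr rfl fun x _ => by rw [Finset.mul_sum]
  have hDvt : Dv t = (∑ p ∈ K ×ˢ K, φ p.2 * g t p) - ∑ p ∈ K ×ˢ K, φ p.1 * g t p := by
    simp only [hDv]
    rw [hA, hB, ← Finset.sum_sub_distrib]
    refine Finset.sum_congr rfl fun x hx => ?_
    rw [hrowt x hx, hcolt x hx]
    ring
  have hedge : ∀ p : V × V, g t p ≠ 0 → φ p.1 - φ p.2 = 1 := by
    intro p hp
    obtain ⟨γ, n, k, hγ, hep, hkn, hx, hy⟩ := (hgsupp t p hp).1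
    have habΓf : (γ 0, γ n) ∈ Γf := (hΓfiff _).mpr hep
    have htele : ∑ i ∈ Finset.range n, (φ (γ i) - φ (γ (i + 1))) = (n : ℝ) := by
      rw [Finset.sum_range_sub' (fun i => φ (γ i)) n]
      have hd := hφdiff (γ 0) (γ n) habΓf
      rw [hd, hγ.2]
    have hle1 : ∀ i ∈ Finset.range n, φ (γ i) - φ (γ (i + 1)) ≤ 1 := by
      intro i hi
      rw [Finset.mem_range] at hi
      have hl := hφlip (γ (i + 1)) (γ i)
      have hd : G.dist (γ (i + 1)) (γ i) = 1 := by
        rw [SimpleGraph.dist_comm]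
        exact SimpleGraph.dist_eq_one_iff_adj.mpr (hγ.1 i hi)
      rw [hd] at hl
      push_cast at hl
      linarith
    have h1 := TF.all_eq_one hle1 htele k (Finset.mem_range.mpr (by omega))
    rw [hx, hy] at h1
    exact h1
  have hsum_eq : ∑ p ∈ K ×ˢ K, (φ p.1 - φ p.2) * g t p = ∑ p ∈ K ×ˢ K, g t p := by
    refine Finset.sum_congr rfl fun p _ => ?_
    by_cases hp : g t p = 0
    · rw [hp, mul_zero]
    · rw [hedge p hp, one_mul]
  have hfinal : ∑ᶠ p : V × V, g t p = ∑ p ∈ K ×ˢ K, g t p := by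
    refine finsum_eq_sum_of_support_subset _ ?_
    intro p hp
    exact Finset.mem_coe.mpr (Finset.mem_product.mpr (hgK t p hp))
  rw [hfinal, ← hsum_eq]
  have hsplit : ∑ p ∈ K ×ˢ K, (φ p.1 - φ p.2) * g t p
      = (∑ p ∈ K ×ˢ K, φ p.1 * g t p) - ∑ p ∈ K ×ˢ K, φ p.2 * g t p := by
    rw [← Finset.sum_sub_distrib]
    exact Finset.sum_congr rfl fun p _ => by ring
  rw [hsplit]
  rw [hDvt] at hDt
  linarith
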